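/- Let N(n) denote the number of clans c ∈ {+,•}ⁿ such that J(c) = ∅ (equivalently, the associated characteristic cycle is irreducible), where J(c) = {j odd, 1 ≤ j ≤ n-1 : h_j(c) = j and c_{n-j} = •}. Then N(2l) = binomial(2l+1, l) and N(2l+1) = 2·N(2l). -/
import Mathlib


/-- A clan of length `n` is a string in `{+, •}ⁿ`, encoded as `Fin n → Bool`
with `true` representing `+` and `false` representing `•` (a number). -/
abbrev Clan (n : ℕ) := Fin n → Bool

/-- The sequence `h_j` attached to a clan `c = (c₁, …, c_n)`: `h₀ = 0`, and
`h_j = h_{j-1}` if `c_{n-j+1} = •`, `h_j = h_{j-1} + 1` if `c_{n-j+1} = +` and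
`h_{j-1} = j - 1`, `h_j = h_{j-1} + 2` if `c_{n-j+1} = +` and `h_{j-1} ≤ j - 2`.
(Indices of `c` are 1-indexed in the informal description; here `c_{n-j+1}`
is the entry of `c : Fin n → Bool` at the 0-indexed position `n - j`.) -/
def hseq (n : ℕ) (c : Clan n) : ℕ → ℕ
  | 0 => 0
  | j + 1 =>
    let p := hseq n c j
    if hj : n - (j + 1) < n then
      if c ⟨n - (j + 1), hj⟩ = false then p
      else if p = j then p + 1
      else if p + 1 ≤ j then p + 2
      else p
    else p

/-- `J(c)`: the set of odd `j` with `1 ≤ j ≤ n - 1` such that `h_j(c) = j` and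
`c_{n-j} = •` (1-indexed), i.e. the entry at 0-indexed position `n - j - 1` is `•`. -/
def Jset (n : ℕ) (c : Clan n) : Set ℕ :=
  {j | j % 2 = 1 ∧ 1 ≤ j ∧ j ≤ n - 1 ∧ hseq n c j = j ∧
    ∀ h : n - j - 1 < n, c ⟨n - j - 1, h⟩ = false}

/-- The recursively defined set `D(c)` of clans indexing the terms of the
characteristic cycle of `L_c`: for a clan of length `0` (hence for length `1`)
it is the singleton `{c}`; `D((+, c')) = {(+, d') : d' ∈ D(c')}`;
`D((•, c')) = {(•, d') : d' ∈ D(c')}` unless `n` is even and `h_{n-1}(c') = n-1`,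
in which case `D((•, c')) = {(•, d') : d' ∈ D(c')} ∪ {(+, d') : d' ∈ D(c')}`. -/
def Dset : (n : ℕ) → Clan n → Set (Clan n)
  | 0, c => {c}
  | n + 1, c =>
    let c' : Clan n := fun i => c i.succ
    if c 0 = true then
      {d | d 0 = true ∧ (fun i : Fin n => d i.succ) ∈ Dset n c'}
    else if (n + 1) % 2 = 0 ∧ hseq n c' n = n then
      {d | (fun i : Fin n => d i.succ) ∈ Dset n c'}
    else
      {d | d 0 = false ∧ (fun i : Fin n => d i.succ) ∈ Dset n c'}

/-- `N(n)`: the number of clans of length `n` with `J(c) = ∅`, i.e. whose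
characteristic cycle is irreducible. -/
noncomputable def Ncount (n : ℕ) : ℕ :=
  {c : Clan n | Jset n c = ∅}.ncard

/-- `N(n, j)`: the number of clans of length `n` with `J(c) = ∅` and `h_n(c) = j`. -/
noncomputable def Ncj (n j : ℕ) : ℕ :=
  {c : Clan n | Jset n c = ∅ ∧ hseq n c n = j}.ncard


lemma hseq_succ (n : ℕ) (c : Clan n) (j : ℕ) :
    hseq n c (j+1) =
      if hj : n - (j + 1) < n then
        if c ⟨n - (j + 1), hj⟩ = false then hseq n c j
        else if hseq n c j = j then hseq n c j + 1
        else if hseq n c j + 1 ≤ j then hseq n c j + 2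
        else hseq n c j
      else hseq n c j := rfl

lemma hseq_le (n : ℕ) (c : Clan n) (j : ℕ) : hseq n c j ≤ j := by
  induction j with
  | zero => simp [hseq]
  | succ j ih =>
    rw [hseq_succ]
    split_ifs <;> omega

lemma hseq_tail (n : ℕ) (c : Clan (n+1)) :
    ∀ j, j ≤ n → hseq (n+1) c j = hseq n (fun i => c i.succ) j := by
  intro j
  induction j with
  | zero => intro _; rfl
  | succ j ih =>
    intro hj
    have h1 : n + 1 - (j + 1) < n + 1 := by omega
    have h2 : n - (j + 1) < n := by omega
    rw [hseq_succ, hseq_succ, dif_pos h1, dif_pos h2, ih (by omega)]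
    have hc : c ⟨n + 1 - (j + 1), h1⟩ = (fun i : Fin n => c i.succ) ⟨n - (j+1), h2⟩ := by
      simp only
      congr 1
      ext
      simp [Fin.succ]
      omega
    rw [hc]

lemma hseq_last (n : ℕ) (c : Clan (n+1)) :
    hseq (n+1) c (n+1) =
      if c 0 = false then hseq n (fun i => c i.succ) n
      else if hseq n (fun i => c i.succ) n = n then n + 1
      else hseq n (fun i => c i.succ) n + 2 := by
  have h1 : n + 1 - (n + 1) < n + 1 := by omega
  rw [hseq_succ, dif_pos h1, hseq_tail n c n le_rfl]
  have h0 : (⟨n + 1 - (n+1), h1⟩ : Fin (n+1)) = 0 := by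
    ext; simp
  rw [h0]
  have hple : hseq n (fun i => c i.succ) n ≤ n := hseq_le _ _ _
  by_cases hc : c 0 = false
  · simp [hc]
  · simp only [hc, if_false]
    by_cases hpn : hseq n (fun i => c i.succ) n = n
    · simp [hpn]
    · have h3 : hseq n (fun i => c i.succ) n + 1 ≤ n := by omega
      simp [hpn, h3]

lemma Jset_empty_succ (n : ℕ) (c : Clan (n+1)) :
    Jset (n+1) c = ∅ ↔
      (Jset n (fun i => c i.succ) = ∅ ∧
        ¬(n % 2 = 1 ∧ hseq n (fun i => c i.succ) n = n ∧ c 0 = false)) := by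
  constructor
  · intro hJ
    constructor
    · ext j
      simp only [Set.mem_empty_iff_false, iff_false]
      intro hj
      obtain ⟨hmod, h1, h2, hh, hc⟩ := hj
      have hjn : j ≤ n - 1 := h2
      have hn2 : 2 ≤ n := by omega
      have hmem : j ∈ Jset (n+1) c := by
        refine ⟨hmod, h1, by omega, ?_, ?_⟩
        · rw [hseq_tail n c j (by omega)]; exact hh
        · intro h
          have heq : (⟨n + 1 - j - 1, h⟩ : Fin (n+1)) =
              Fin.succ ⟨n - j - 1, by omega⟩ := by
            ext; simp [Fin.succ]; omega
          rw [heq]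
          exact hc (by omega)
      rw [hJ] at hmem
      exact hmem
    · rintro ⟨hmod, hh, hc⟩
      have hmem : n ∈ Jset (n+1) c := by
        refine ⟨hmod, by omega, by omega, ?_, ?_⟩
        · rw [hseq_tail n c n le_rfl]; exact hh
        · intro h
          have heq : (⟨n + 1 - n - 1, h⟩ : Fin (n+1)) = 0 := by
            ext; simp only [Fin.val_zero]; omega
          rw [heq]; exact hc
      rw [hJ] at hmem
      exact hmem
  · rintro ⟨hJ, hlast⟩
    ext j
    simp only [Set.mem_empty_iff_false, iff_false]
    rintro ⟨hmod, h1, h2, hh, hc⟩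
    have hjn : j ≤ n := by omega
    by_cases hje : j = n
    · refine hlast ⟨by omega, ?_, ?_⟩
      · rw [← hseq_tail n c n le_rfl]
        rw [hje] at hh; exact hh
      · have := hc (by omega)
        have heq : (⟨n + 1 - j - 1, by omega⟩ : Fin (n+1)) = 0 := by
          ext; simp only [Fin.val_zero]; omega
        rw [heq] at this
        exact this
    · have hjn1 : j ≤ n - 1 := by omega
      have h1n : 1 ≤ n := by omega
      have hmem : j ∈ Jset n (fun i => c i.succ) := by
        refine ⟨hmod, h1, hjn1, ?_, ?_⟩
        · rw [← hseq_tail n c j (by omega)]; exact hh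
        · intro h
          have := hc (by omega)
          have heq : (⟨n + 1 - j - 1, by omega⟩ : Fin (n+1)) =
              Fin.succ ⟨n - j - 1, h⟩ := by
            ext; simp [Fin.succ]; omega
          rw [heq] at this
          exact this
      rw [hJ] at hmem
      exact hmem

lemma ncard_cons_eq (n : ℕ) (b : Bool) (p : Clan (n+1) → Prop) :
    {c : Clan (n+1) | p c ∧ c 0 = b}.ncard = {d : Clan n | p (Fin.cons b d)}.ncard := by
  set f : Clan n → Clan (n+1) := fun d => Fin.cons b d with hf
  have hset : {c : Clan (n+1) | p c ∧ c 0 = b}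
      = f '' {d : Clan n | p (Fin.cons b d)} := by
    ext c
    simp only [Set.mem_setOf_eq, Set.mem_image]
    constructor
    · rintro ⟨hp, hb⟩
      refine ⟨Fin.tail c, ?_, ?_⟩
      · show p (Fin.cons b (Fin.tail c))
        rw [← hb, Fin.cons_self_tail]; exact hp
      · show Fin.cons b (Fin.tail c) = c
        rw [← hb, Fin.cons_self_tail]
    · rintro ⟨d, hd, rfl⟩
      exact ⟨hd, Fin.cons_zero _ _⟩
  have hinj : Function.Injective f := by
    intro d1 d2 h
    have := congrArg Fin.tail h
    simp only [hf] at this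
    rwa [Fin.tail_cons, Fin.tail_cons] at this
  rw [hset, Set.ncard_image_of_injective _ hinj]

lemma ncard_split (n : ℕ) (p : Clan (n+1) → Prop) :
    {c : Clan (n+1) | p c}.ncard =
      {c : Clan (n+1) | p c ∧ c 0 = false}.ncard
        + {c : Clan (n+1) | p c ∧ c 0 = true}.ncard := by
  rw [← Set.ncard_union_eq ?dis (Set.toFinite _) (Set.toFinite _)]
  · congr 1
    ext c
    by_cases h : c 0 = true <;> simp [Set.mem_setOf_eq, h]
  case dis =>
    rw [Set.disjoint_left]
    rintro c ⟨_, h1⟩ ⟨_, h2⟩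
    rw [h1] at h2
    exact Bool.false_ne_true h2

lemma tail_cons_eq (n : ℕ) (b : Bool) (d : Clan n) :
    (fun i : Fin n => (Fin.cons b d : Clan (n+1)) i.succ) = d := by
  funext i; simp [Fin.cons_succ]

lemma Ncj_succ (n j : ℕ) :
    Ncj (n+1) j =
      (if n % 2 = 1 ∧ j = n then 0 else Ncj n j)
      + (if j = n + 1 then Ncj n n + (if n = 0 then 0 else Ncj n (n-1))
         else if 2 ≤ j ∧ j ≤ n then Ncj n (j-2) else 0) := by
  have hkeyf : ∀ d : Clan n,
      (Jset (n+1) (Fin.cons false d) = ∅ ∧ hseq (n+1) (Fin.cons false d) (n+1) = j)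
      ↔ ((Jset n d = ∅ ∧ ¬(n % 2 = 1 ∧ hseq n d n = n)) ∧ hseq n d n = j) := by
    intro d
    rw [Jset_empty_succ, hseq_last, tail_cons_eq]
    have h0 : (Fin.cons false d : Clan (n+1)) 0 = false := Fin.cons_zero _ _
    rw [h0]
    simp only [eq_self_iff_true, and_true, if_true]
  have hkeyt : ∀ d : Clan n,
      (Jset (n+1) (Fin.cons true d) = ∅ ∧ hseq (n+1) (Fin.cons true d) (n+1) = j)
      ↔ (Jset n d = ∅ ∧ (if hseq n d n = n then n + 1 else hseq n d n + 2) = j) := by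
    intro d
    rw [Jset_empty_succ, hseq_last, tail_cons_eq]
    have h0 : (Fin.cons true d : Clan (n+1)) 0 = true := Fin.cons_zero _ _
    rw [h0]
    simp only [Bool.true_eq_false, if_false, and_false, not_false_iff, and_true]
  -- false piece
  have hfalse : {d : Clan n | Jset (n+1) (Fin.cons false d) = ∅
      ∧ hseq (n+1) (Fin.cons false d) (n+1) = j}.ncard
      = if n % 2 = 1 ∧ j = n then 0 else Ncj n j := by
    split_ifs with hc
    · have : {d : Clan n | Jset (n+1) (Fin.cons false d) = ∅
          ∧ hseq (n+1) (Fin.cons false d) (n+1) = j} = ∅ := by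
        ext d
        simp only [Set.mem_setOf_eq, Set.mem_empty_iff_false, iff_false]
        rw [hkeyf d]
        rintro ⟨⟨_, hne⟩, hh⟩
        exact hne ⟨hc.1, by rw [hh, hc.2]⟩
      rw [this, Set.ncard_empty]
    · rw [Ncj]
      congr 1
      ext d
      simp only [Set.mem_setOf_eq]
      rw [hkeyf d]
      constructor
      · rintro ⟨⟨hJ, _⟩, hh⟩; exact ⟨hJ, hh⟩
      · rintro ⟨hJ, hh⟩
        refine ⟨⟨hJ, ?_⟩, hh⟩
        rintro ⟨a, b⟩
        exact hc ⟨a, by omega⟩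
  -- true piece
  have htrue : {d : Clan n | Jset (n+1) (Fin.cons true d) = ∅
      ∧ hseq (n+1) (Fin.cons true d) (n+1) = j}.ncard
      = if j = n + 1 then Ncj n n + (if n = 0 then 0 else Ncj n (n-1))
        else if 2 ≤ j ∧ j ≤ n then Ncj n (j-2) else 0 := by
    split_ifs with hj hn hj2
    · -- j = n + 1, n = 0
      rw [Ncj]
      have : {d : Clan n | Jset (n+1) (Fin.cons true d) = ∅
          ∧ hseq (n+1) (Fin.cons true d) (n+1) = j}
          = {c : Clan n | Jset n c = ∅ ∧ hseq n c n = n} := by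
        ext d
        simp only [Set.mem_setOf_eq]
        rw [hkeyt d]
        have hle := hseq_le n d n
        constructor
        · rintro ⟨hJ, hh⟩
          refine ⟨hJ, ?_⟩
          by_cases h : hseq n d n = n
          · exact h
          · rw [if_neg h] at hh; omega
        · rintro ⟨hJ, hh⟩
          exact ⟨hJ, by rw [if_pos hh]; omega⟩
      rw [this]
      omega
    · -- j = n + 1, n ≠ 0 : two disjoint parts
      have hset : {d : Clan n | Jset (n+1) (Fin.cons true d) = ∅
          ∧ hseq (n+1) (Fin.cons true d) (n+1) = j}
          = {c : Clan n | Jset n c = ∅ ∧ hseq n c n = n}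
            ∪ {c : Clan n | Jset n c = ∅ ∧ hseq n c n = n - 1} := by
        ext d
        simp only [Set.mem_setOf_eq, Set.mem_union]
        rw [hkeyt d]
        have hle := hseq_le n d n
        constructor
        · rintro ⟨hJ, hh⟩
          by_cases h : hseq n d n = n
          · exact Or.inl ⟨hJ, h⟩
          · rw [if_neg h] at hh
            exact Or.inr ⟨hJ, by omega⟩
        · rintro (⟨hJ, hh⟩ | ⟨hJ, hh⟩)
          · exact ⟨hJ, by rw [if_pos hh]; omega⟩
          · refine ⟨hJ, ?_⟩
            rw [if_neg (by omega)]
            omega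
      rw [hset, Set.ncard_union_eq ?_ (Set.toFinite _) (Set.toFinite _), Ncj, Ncj]
      rw [Set.disjoint_left]
      rintro c ⟨_, h1⟩ ⟨_, h2⟩
      omega
    · -- 2 ≤ j ≤ n
      rw [Ncj]
      have : {d : Clan n | Jset (n+1) (Fin.cons true d) = ∅
          ∧ hseq (n+1) (Fin.cons true d) (n+1) = j}
          = {c : Clan n | Jset n c = ∅ ∧ hseq n c n = j - 2} := by
        ext d
        simp only [Set.mem_setOf_eq]
        rw [hkeyt d]
        have hle := hseq_le n d n
        constructor
        · rintro ⟨hJ, hh⟩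
          by_cases h : hseq n d n = n
          · rw [if_pos h] at hh; omega
          · rw [if_neg h] at hh; exact ⟨hJ, by omega⟩
        · rintro ⟨hJ, hh⟩
          refine ⟨hJ, ?_⟩
          rw [if_neg (by omega)]
          omega
      rw [this]
    · -- empty
      have : {d : Clan n | Jset (n+1) (Fin.cons true d) = ∅
          ∧ hseq (n+1) (Fin.cons true d) (n+1) = j} = ∅ := by
        ext d
        simp only [Set.mem_setOf_eq, Set.mem_empty_iff_false, iff_false]
        rw [hkeyt d]
        have hle := hseq_le n d n
        rintro ⟨_, hh⟩
        by_cases h : hseq n d n = n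
        · rw [if_pos h] at hh; omega
        · rw [if_neg h] at hh; omega
      rw [this, Set.ncard_empty]
  have hsplit := ncard_split n
    (fun c => Jset (n+1) c = ∅ ∧ hseq (n+1) c (n+1) = j)
  have e1 := ncard_cons_eq n false
    (fun c => Jset (n+1) c = ∅ ∧ hseq (n+1) c (n+1) = j)
  have e2 := ncard_cons_eq n true
    (fun c => Jset (n+1) c = ∅ ∧ hseq (n+1) c (n+1) = j)
  have hmain : Ncj (n+1) j =
      {d : Clan n | Jset (n+1) (Fin.cons false d) = ∅
          ∧ hseq (n+1) (Fin.cons false d) (n+1) = j}.ncard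
      + {d : Clan n | Jset (n+1) (Fin.cons true d) = ∅
          ∧ hseq (n+1) (Fin.cons true d) (n+1) = j}.ncard := by
    rw [Ncj]
    exact hsplit.trans (by rw [e1, e2])
  rw [hmain, hfalse, htrue]

lemma Ncount_eq_sum (n : ℕ) :
    Ncount n = ∑ j ∈ Finset.range (n+1), Ncj n j := by
  have haux : ∀ m : ℕ,
      {c : Clan n | Jset n c = ∅ ∧ hseq n c n < m}.ncard
        = ∑ j ∈ Finset.range m, Ncj n j := by
    intro m
    induction m with
    | zero =>
      have : {c : Clan n | Jset n c = ∅ ∧ hseq n c n < 0} = ∅ := by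
        ext c; simp
      rw [this]
      simp
    | succ m ih =>
      have hsp : {c : Clan n | Jset n c = ∅ ∧ hseq n c n < m + 1}
          = {c : Clan n | Jset n c = ∅ ∧ hseq n c n < m}
            ∪ {c : Clan n | Jset n c = ∅ ∧ hseq n c n = m} := by
        ext c
        simp only [Set.mem_setOf_eq, Set.mem_union]
        constructor
        · rintro ⟨hJ, hh⟩
          rcases Nat.lt_succ_iff_lt_or_eq.mp hh with h | h
          · exact Or.inl ⟨hJ, h⟩
          · exact Or.inr ⟨hJ, h⟩
        · rintro (⟨hJ, hh⟩ | ⟨hJ, hh⟩) <;> exact ⟨hJ, by omega⟩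
      rw [hsp, Set.ncard_union_eq ?_ (Set.toFinite _) (Set.toFinite _),
        Finset.sum_range_succ, ih, Ncj]
      rw [Set.disjoint_left]
      rintro c ⟨_, h1⟩ ⟨_, h2⟩
      omega
  have : {c : Clan n | Jset n c = ∅}
      = {c : Clan n | Jset n c = ∅ ∧ hseq n c n < n + 1} := by
    ext c
    simp only [Set.mem_setOf_eq]
    exact ⟨fun h => ⟨h, Nat.lt_succ_of_le (hseq_le n c n)⟩, fun h => h.1⟩
  rw [Ncount, this, haux]

lemma Ncount_odd (n : ℕ) (hn : n % 2 = 0) : Ncount (n+1) = 2 * Ncount n := by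
  have key : ∀ b : Bool, {d : Clan n | Jset (n+1) (Fin.cons b d) = ∅}
      = {d : Clan n | Jset n d = ∅} := by
    intro b
    ext d
    simp only [Set.mem_setOf_eq]
    rw [Jset_empty_succ, tail_cons_eq]
    constructor
    · exact fun h => h.1
    · intro h
      exact ⟨h, by omega⟩
  have hsplit := ncard_split n (fun c => Jset (n+1) c = ∅)
  have e1 := ncard_cons_eq n false (fun c => Jset (n+1) c = ∅)
  have e2 := ncard_cons_eq n true (fun c => Jset (n+1) c = ∅)
  rw [Ncount]
  rw [hsplit, e1, e2]
  clear hsplit e1 e2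
  rw [key false, key true, Ncount]
  omega

lemma Ncj_zero : ∀ j, Ncj 0 j = if j = 0 then 1 else 0 := by
  intro j
  have hJ : ∀ c : Clan 0, Jset 0 c = ∅ := by
    intro c
    ext i
    simp only [Jset, Set.mem_setOf_eq, Set.mem_empty_iff_false, iff_false]
    rintro ⟨_, h1, h2, _⟩
    omega
  have hh : ∀ c : Clan 0, hseq 0 c 0 = 0 := fun _ => rfl
  rw [Ncj]
  split_ifs with h
  · subst h
    have : {c : Clan 0 | Jset 0 c = ∅ ∧ hseq 0 c 0 = 0} = Set.univ := by
      ext c; simp [hJ c, hh c]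
    rw [this, Set.ncard_univ]
    simp [Nat.card_eq_fintype_card]
  · have : {c : Clan 0 | Jset 0 c = ∅ ∧ hseq 0 c 0 = j} = ∅ := by
      ext c
      simp [hJ c, hh c]
      omega
    rw [this, Set.ncard_empty]

lemma pascal2 (n k : ℕ) :
    (n+2).choose (k+2) = n.choose k + 2 * n.choose (k+1) + n.choose (k+2) := by
  rw [show n + 2 = (n+1)+1 from rfl, Nat.choose_succ_succ' (n+1) (k+1),
    Nat.choose_succ_succ' n k, Nat.choose_succ_succ' n (k+1)]
  ring

theorem main_even (l : ℕ) :
    (∀ k, k ≤ l → Ncj (2*l) (2*k) + (if 2 ≤ k then (2*l).choose (k-2) else 0)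
        = (2*l).choose k)
    ∧ (∀ j, j % 2 = 1 ∨ 2*l < j → Ncj (2*l) j = 0) := by
  induction l with
  | zero =>
    constructor
    · intro k hk
      interval_cases k
      simp [Ncj_zero 0]
    · intro j hj
      rw [show 2*0 = 0 from rfl] at *
      rw [Ncj_zero j, if_neg (by omega)]
  | succ l ih =>
    obtain ⟨H1, H2⟩ := ih
    -- odd level facts
    have O1 : ∀ k, k ≤ l → Ncj (2*l+1) (2*k)
        = Ncj (2*l) (2*k) + (if 1 ≤ k then Ncj (2*l) (2*k-2) else 0) := by
      intro k hk
      have h := Ncj_succ (2*l) (2*k)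
      rw [if_neg (by omega : ¬((2*l) % 2 = 1 ∧ 2*k = 2*l)),
        if_neg (by omega : ¬(2*k = 2*l + 1))] at h
      by_cases hk1 : 1 ≤ k
      · rw [if_pos (by omega : 2 ≤ 2*k ∧ 2*k ≤ 2*l)] at h
        rw [h, if_pos hk1]
      · rw [if_neg (by omega : ¬(2 ≤ 2*k ∧ 2*k ≤ 2*l))] at h
        rw [h, if_neg hk1]
    have O2 : Ncj (2*l+1) (2*l+1) = Ncj (2*l) (2*l) := by
      have h := Ncj_succ (2*l) (2*l+1)
      rw [if_neg (by omega : ¬((2*l) % 2 = 1 ∧ 2*l+1 = 2*l)),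
        if_pos rfl] at h
      have hz : Ncj (2*l) (2*l+1) = 0 := H2 _ (by omega)
      by_cases hl : 2*l = 0
      · rw [if_pos hl] at h
        omega
      · rw [if_neg hl] at h
        have h2 : Ncj (2*l) (2*l-1) = 0 := H2 _ (by omega)
        omega
    have O3 : ∀ j, ((j % 2 = 1 ∧ j ≠ 2*l+1) ∨ 2*l+1 < j) → Ncj (2*l+1) j = 0 := by
      intro j hj
      have h := Ncj_succ (2*l) j
      rw [if_neg (by omega : ¬((2*l) % 2 = 1 ∧ j = 2*l)),
        if_neg (by omega : ¬(j = 2*l + 1))] at h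
      have hz : Ncj (2*l) j = 0 := H2 _ (by omega)
      by_cases hb : 2 ≤ j ∧ j ≤ 2*l
      · rw [if_pos hb] at h
        have h2 : Ncj (2*l) (j-2) = 0 := H2 _ (by omega)
        omega
      · rw [if_neg hb] at h
        omega
    have step2 : ∀ j, Ncj (2*l+1+1) j =
        (if j = 2*l+1 then 0 else Ncj (2*l+1) j)
        + (if j = 2*l+2 then Ncj (2*l+1) (2*l+1) + Ncj (2*l+1) (2*l)
           else if 2 ≤ j ∧ j ≤ 2*l+1 then Ncj (2*l+1) (j-2) else 0) := by
      intro j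
      have h := Ncj_succ (2*l+1) j
      rw [show (2*l+1) - 1 = 2*l from by omega, if_neg (by omega : ¬(2*l+1 = 0))] at h
      by_cases hj : j = 2*l+1
      · rw [if_pos (by omega : (2*l+1) % 2 = 1 ∧ j = 2*l+1)] at h
        rw [if_pos hj]
        exact h
      · rw [if_neg (by omega : ¬((2*l+1) % 2 = 1 ∧ j = 2*l+1))] at h
        rw [if_neg hj]
        exact h
    constructor
    · -- E1
      intro k hk
      by_cases hktop : k = l + 1
      · subst hktop
        by_cases hl3 : 3 ≤ l
        · obtain ⟨m, rfl⟩ : ∃ m, l = m + 3 := ⟨l-3, by omega⟩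
          rw [show m+3+1 = m+4 from by omega]
          rw [if_pos (by omega : 2 ≤ m+4), show m+4-2 = m+2 from by omega]
          have h := step2 (2*(m+4))
          rw [if_neg (by omega : ¬(2*(m+4) = 2*(m+3)+1)),
            if_pos (by omega : 2*(m+4) = 2*(m+3)+2),
            show 2*(m+3)+1+1 = 2*(m+4) from by omega] at h
          have z1 : Ncj (2*(m+3)+1) (2*(m+4)) = 0 := O3 _ (by omega)
          have o2 := O2
          have o1 := O1 (m+3) le_rfl
          rw [if_pos (by omega : 1 ≤ m+3), show 2*(m+3)-2 = 2*(m+2) from by omega] at o1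
          have al := H1 (m+3) le_rfl
          rw [if_pos (by omega : 2 ≤ m+3), show m+3-2 = m+1 from by omega] at al
          have al1 := H1 (m+2) (by omega)
          rw [if_pos (by omega : 2 ≤ m+2), show m+2-2 = m from by omega] at al1
          have p1 := pascal2 (2*(m+3)) (m+2)
          rw [show m+2+1 = m+3 from by omega, show m+2+2 = m+4 from by omega,
            show 2*(m+3)+2 = 2*(m+4) from by omega] at p1
          have t := Nat.choose_symm (by omega : m+4 ≤ 2*(m+3))
          rw [show 2*(m+3)-(m+4) = m+2 from by omega] at t
          have p2 := pascal2 (2*(m+3)) m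
          rw [show 2*(m+3)+2 = 2*(m+4) from by omega] at p2
          omega
        · interval_cases l
          · -- l = 0, k = 1
            rw [if_neg (by omega : ¬(2 ≤ 0+1))]
            have h := step2 (2*(0+1))
            rw [if_neg (by omega : ¬(2*(0+1) = 2*0+1)),
              if_pos (by omega : 2*(0+1) = 2*0+2)] at h
            have z1 : Ncj (2*0+1) (2*(0+1)) = 0 := O3 _ (by omega)
            have o2 := O2
            have o1 := O1 0 le_rfl
            rw [if_neg (by omega : ¬(1 ≤ 0))] at o1
            have a0 := H1 0 le_rfl
            rw [if_neg (by omega : ¬(2 ≤ 0))] at a0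
            norm_num at h z1 o2 o1 a0 ⊢
            have d1 : Nat.choose 0 0 = 1 := by decide
            have d2 : Nat.choose 2 1 = 2 := by decide
            omega
          · -- l = 1, k = 2
            rw [if_pos (by omega : 2 ≤ 1+1), show 1+1-2 = 0 from by omega]
            have h := step2 (2*(1+1))
            rw [if_neg (by omega : ¬(2*(1+1) = 2*1+1)),
              if_pos (by omega : 2*(1+1) = 2*1+2)] at h
            have z1 : Ncj (2*1+1) (2*(1+1)) = 0 := O3 _ (by omega)
            have o2 := O2
            have o1 := O1 1 le_rfl
            rw [if_pos (by omega : 1 ≤ 1)] at o1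
            have a1 := H1 1 le_rfl
            rw [if_neg (by omega : ¬(2 ≤ 1))] at a1
            have a0 := H1 0 (by omega)
            rw [if_neg (by omega : ¬(2 ≤ 0))] at a0
            norm_num at h z1 o2 o1 a1 a0 ⊢
            have d1 : Nat.choose 2 1 = 2 := by decide
            have d2 : Nat.choose 2 0 = 1 := by decide
            have d3 : Nat.choose 4 0 = 1 := by decide
            have d4 : Nat.choose 4 2 = 6 := by decide
            omega
          · -- l = 2, k = 3
            rw [if_pos (by omega : 2 ≤ 2+1), show 2+1-2 = 1 from by omega]
            have h := step2 (2*(2+1))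
            rw [if_neg (by omega : ¬(2*(2+1) = 2*2+1)),
              if_pos (by omega : 2*(2+1) = 2*2+2)] at h
            have z1 : Ncj (2*2+1) (2*(2+1)) = 0 := O3 _ (by omega)
            have o2 := O2
            have o1 := O1 2 le_rfl
            rw [if_pos (by omega : 1 ≤ 2)] at o1
            have a2 := H1 2 le_rfl
            rw [if_pos (by omega : 2 ≤ 2), show 2-2 = 0 from by omega] at a2
            have a1 := H1 1 (by omega)
            rw [if_neg (by omega : ¬(2 ≤ 1))] at a1
            norm_num at h z1 o2 o1 a2 a1 ⊢
            have d1 : Nat.choose 4 0 = 1 := by decide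
            have d2 : Nat.choose 4 2 = 6 := by decide
            have d3 : Nat.choose 4 1 = 4 := by decide
            have d4 : Nat.choose 6 1 = 6 := by decide
            have d5 : Nat.choose 6 3 = 20 := by decide
            omega
      · -- k ≤ l
        have hkl : k ≤ l := by omega
        by_cases hk0 : k = 0
        · subst hk0
          have h := step2 (2*0)
          rw [if_neg (by omega : ¬(2*0 = 2*l+1)),
            if_neg (by omega : ¬(2*0 = 2*l+2)),
            if_neg (by omega : ¬(2 ≤ 2*0 ∧ 2*0 ≤ 2*l+1)),
            show 2*l+1+1 = 2*(l+1) from by omega] at h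
          have o0 := O1 0 (by omega)
          rw [if_neg (by omega : ¬(1 ≤ 0))] at o0
          have a0 := H1 0 (by omega)
          rw [if_neg (by omega : ¬(2 ≤ 0))] at a0
          rw [if_neg (by omega : ¬(2 ≤ 0))]
          have c1 : (2*l).choose 0 = 1 := Nat.choose_zero_right _
          have c2 : (2*(l+1)).choose 0 = 1 := Nat.choose_zero_right _
          omega
        · by_cases hk1 : k = 1
          · subst hk1
            have h := step2 (2*1)
            rw [if_neg (by omega : ¬(2*1 = 2*l+1)),
              if_neg (by omega : ¬(2*1 = 2*l+2)),
              if_pos (by omega : 2 ≤ 2*1 ∧ 2*1 ≤ 2*l+1),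
              show 2*1-2 = 2*0 from by omega,
              show 2*l+1+1 = 2*(l+1) from by omega] at h
            have ok := O1 1 hkl
            rw [if_pos (by omega : 1 ≤ 1), show 2*1-2 = 2*0 from by omega] at ok
            have o0 := O1 0 (by omega)
            rw [if_neg (by omega : ¬(1 ≤ 0))] at o0
            have a1 := H1 1 hkl
            rw [if_neg (by omega : ¬(2 ≤ 1))] at a1
            have a0 := H1 0 (by omega)
            rw [if_neg (by omega : ¬(2 ≤ 0))] at a0
            rw [if_neg (by omega : ¬(2 ≤ 1))]
            have c1 : (2*(l+1)).choose 1 = 2*(l+1) := Nat.choose_one_right _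
            have c2 : (2*l).choose 1 = 2*l := Nat.choose_one_right _
            have c3 : (2*l).choose 0 = 1 := Nat.choose_zero_right _
            omega
          · -- k = m + 2
            obtain ⟨m, rfl⟩ : ∃ m, k = m + 2 := ⟨k-2, by omega⟩
            have h := step2 (2*(m+2))
            rw [if_neg (by omega : ¬(2*(m+2) = 2*l+1)),
              if_neg (by omega : ¬(2*(m+2) = 2*l+2)),
              if_pos (by omega : 2 ≤ 2*(m+2) ∧ 2*(m+2) ≤ 2*l+1),
              show 2*(m+2)-2 = 2*(m+1) from by omega,
              show 2*l+1+1 = 2*(l+1) from by omega] at h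
            have ok := O1 (m+2) hkl
            rw [if_pos (by omega : 1 ≤ m+2), show 2*(m+2)-2 = 2*(m+1) from by omega] at ok
            have ok1 := O1 (m+1) (by omega)
            rw [if_pos (by omega : 1 ≤ m+1), show 2*(m+1)-2 = 2*m from by omega] at ok1
            have ak := H1 (m+2) hkl
            rw [if_pos (by omega : 2 ≤ m+2), show m+2-2 = m from by omega] at ak
            have ak1 := H1 (m+1) (by omega)
            have ak2 := H1 m (by omega)
            rw [if_pos (by omega : 2 ≤ m+2), show m+2-2 = m from by omega]
            have p1 := pascal2 (2*l) m
            rw [show 2*l+2 = 2*(l+1) from by omega] at p1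
            by_cases hm2 : 2 ≤ m
            · rw [if_pos hm2] at ak2
              rw [if_pos (by omega : 2 ≤ m+1), show m+1-2 = m-1 from by omega] at ak1
              have p2 := pascal2 (2*l) (m-2)
              rw [show m-2+2 = m from by omega, show m-2+1 = m-1 from by omega,
                show 2*l+2 = 2*(l+1) from by omega] at p2
              omega
            · rcases (by omega : m = 0 ∨ m = 1) with rfl | rfl
              · rw [if_neg (by omega : ¬(2 ≤ 0))] at ak2
                rw [if_neg (by omega : ¬(2 ≤ 0+1))] at ak1
                have c1 : (2*(l+1)).choose 0 = 1 := Nat.choose_zero_right _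
                have c2 : (2*l).choose 0 = 1 := Nat.choose_zero_right _
                omega
              · rw [if_neg (by omega : ¬(2 ≤ 1))] at ak2
                rw [if_pos (by omega : 2 ≤ 1+1), show 1+1-2 = 0 from by omega] at ak1
                have c1 : (2*(l+1)).choose 1 = 2*(l+1) := Nat.choose_one_right _
                have c2 : (2*l).choose 1 = 2*l := Nat.choose_one_right _
                have c3 : (2*l).choose 0 = 1 := Nat.choose_zero_right _
                omega
    · -- E2
      intro j hj
      have h := step2 j
      rw [show 2*l+1+1 = 2*(l+1) from by omega] at h
      rw [if_neg (by omega : ¬(j = 2*(l+1)))] at h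
      by_cases hj1 : j = 2*l+1
      · rw [if_pos hj1] at h
        by_cases hb : 2 ≤ j ∧ j ≤ 2*l+1
        · rw [if_pos hb] at h
          have : Ncj (2*l+1) (j-2) = 0 := O3 _ (by omega)
          omega
        · rw [if_neg hb] at h
          omega
      · rw [if_neg hj1] at h
        have hz : Ncj (2*l+1) j = 0 := O3 _ (by omega)
        by_cases hb : 2 ≤ j ∧ j ≤ 2*l+1
        · rw [if_pos hb] at h
          have : Ncj (2*l+1) (j-2) = 0 := O3 _ (by omega)
          omega
        · rw [if_neg hb] at h
          omega

lemma sum_even (f : ℕ → ℕ) (hodd : ∀ j, j % 2 = 1 → f j = 0) (m : ℕ) :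
    ∑ j ∈ Finset.range (2*m+1), f j = ∑ k ∈ Finset.range (m+1), f (2*k) := by
  induction m with
  | zero => simp
  | succ m ih =>
    rw [show 2*(m+1)+1 = (2*m+1)+1+1 from by omega, Finset.sum_range_succ,
      Finset.sum_range_succ, ih, Finset.sum_range_succ (fun k => f (2*k)) (m+1)]
    rw [hodd (2*m+1) (by omega), show 2*m+1+1 = 2*(m+1) from by omega]
    omega


/-- The number of highest weight Harish-Chandra modules of `Sp(2n, ℝ)` of
infinitesimal character `ρ` with irreducible characteristic cycle:
`N(2l) = C(2l+1, l)` and `N(2l+1) = 2 N(2l)`. -/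
theorem stmt10 (l : ℕ) :
    Ncount (2 * l) = Nat.choose (2 * l + 1) l ∧
    Ncount (2 * l + 1) = 2 * Ncount (2 * l) := by
  refine ⟨?_, Ncount_odd (2*l) (by omega)⟩
  obtain ⟨H1, H2⟩ := main_even l
  rw [Ncount_eq_sum, sum_even _ (fun j hj => H2 j (Or.inl hj)) l]
  -- now sum over k of Ncj (2l) (2k)
  have hsum : ∑ k ∈ Finset.range (l+1),
      (Ncj (2*l) (2*k) + (if 2 ≤ k then (2*l).choose (k-2) else 0))
      = ∑ k ∈ Finset.range (l+1), (2*l).choose k := by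
    apply Finset.sum_congr rfl
    intro k hk
    exact H1 k (by simp at hk; omega)
  rw [Finset.sum_add_distrib] at hsum
  rcases Nat.eq_zero_or_pos l with rfl | hl
  · simp at hsum ⊢
    omega
  · obtain ⟨m, rfl⟩ : ∃ m, l = m + 1 := ⟨l-1, by omega⟩
    -- guard sum equals sum over range m of choose
    have hguard : ∑ k ∈ Finset.range (m+1+1), (if 2 ≤ k then (2*(m+1)).choose (k-2) else 0)
        = ∑ k ∈ Finset.range m, (2*(m+1)).choose k := by
      rw [Finset.sum_range_succ']
      rw [Finset.sum_range_succ']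
      simp only [if_neg (by omega : ¬(2 ≤ 0)), if_neg (by omega : ¬(2 ≤ 0+1))]
      have : ∀ i, (if 2 ≤ i+1+1 then (2*(m+1)).choose (i+1+1-2) else 0)
          = (2*(m+1)).choose i := by
        intro i
        rw [if_pos (by omega), show i+1+1-2 = i from by omega]
      simp only [this]
      omega
    rw [hguard] at hsum
    have hsplit : ∑ k ∈ Finset.range (m+1+1), (2*(m+1)).choose k
        = ∑ k ∈ Finset.range m, (2*(m+1)).choose k
          + (2*(m+1)).choose m + (2*(m+1)).choose (m+1) := by
      rw [Finset.sum_range_succ, Finset.sum_range_succ]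
    have hpas : (2*(m+1)+1).choose (m+1) = (2*(m+1)).choose m + (2*(m+1)).choose (m+1) :=
      Nat.choose_succ_succ' (2*(m+1)) m
    omega
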